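/- arXiv:1204.1359 — 5 statements merged into one kernel-verified Lean document; each statement's English description precedes it below -/
import Mathlib

section
/- Let Λ = (Λ_i)_{i∈I} be a g-frame for H with bounds A, B, and let C, C′ be positive invertible operators on H that commute with each other and commute with the frame operator S_Λ (where S_Λ f = ∑_{i∈I} Λ_i*Λ_i f). Suppose m·I ≤ C ≤ M·I and m′·I ≤ C′ ≤ M′·I for constants 0 < m ≤ M < ∞ and 0 < m′ ≤ M′ < ∞. Then for every f ∈ H the family (⟨Λ_i(Cf), Λ_i(C′f)⟩)_{i∈I} is summable and m m′ A ‖f‖² ≤ Re ∑_{i∈I} ⟨Λ_i(Cf), Λ_i(C′f)⟩ ≤ M M′ B ‖f‖²; that is, Λ is a (C,C′)-controlled g-frame with bounds m m′ A and M M′ B. -/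
section Helpers
open ContinuousLinearMap Polynomial

variable {H : Type*} [NormedAddCommGroup H] [InnerProductSpace ℂ H] [CompleteSpace H]

lemma commute_cfcHom_aux {a b : H →L[ℂ] H} (hab : Commute b a) (ha' : IsSelfAdjoint a)
    (g : C(spectrum ℝ a, ℝ)) : Commute b (cfcHom ha' g) := by
  set Sset : Set C(spectrum ℝ a, ℝ) := {g | b * cfcHom ha' g = cfcHom ha' g * b} with hSset
  have hclosed : IsClosed Sset :=
    isClosed_eq (continuous_const.mul (cfcHom_continuous ha'))
      ((cfcHom_continuous ha').mul continuous_const)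
  have hpoly : (polynomialFunctions (spectrum ℝ a) : Set C(spectrum ℝ a, ℝ)) ⊆ Sset := by
    rw [polynomialFunctions_coe]
    rintro _ ⟨p, rfl⟩
    let φ : ℝ[X] →ₐ[ℝ] (H →L[ℂ] H) :=
      ((cfcHom ha' (R := ℝ)).toAlgHom).comp (toContinuousMapOnAlgHom (spectrum ℝ a))
    have hφX : φ X = a := by
      show cfcHom ha' ((toContinuousMapOnAlgHom (spectrum ℝ a)) X) = a
      rw [toContinuousMapOnAlgHom_apply, toContinuousMapOn_X_eq_restrict_id, cfcHom_id]
    have hcomm : Commute b (φ p) := by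
      induction p using Polynomial.induction_on with
      | C c =>
          have : φ (C c) = algebraMap ℝ (H →L[ℂ] H) c := by
            rw [← Polynomial.algebraMap_eq]; exact AlgHomClass.commutes φ c
          rw [this]
          exact Algebra.commute_algebraMap_right c b
      | add p q hp hq => simpa [map_add] using hp.add_right hq
      | monomial n c hcn =>
          have : φ (C c * X ^ (n + 1)) = φ (C c * X ^ n) * a := by
            rw [pow_succ, ← mul_assoc, map_mul, hφX]
          rw [this]
          exact hcn.mul_right hab
    exact hcomm
  have hdense : closure ((polynomialFunctions (spectrum ℝ a) : Set C(spectrum ℝ a, ℝ)))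
      = Set.univ := by
    have h : ((polynomialFunctions (spectrum ℝ a)).topologicalClosure :
        Set C(spectrum ℝ a, ℝ)) = ((⊤ : Subalgebra ℝ C(spectrum ℝ a, ℝ)) : Set _) := by
      rw [polynomialFunctions.topologicalClosure (spectrum ℝ a)]
    simpa [Subalgebra.topologicalClosure_coe] using h
  have : g ∈ Sset := by
    have hg : g ∈ closure ((polynomialFunctions (spectrum ℝ a) : Set C(spectrum ℝ a, ℝ))) := by
      rw [hdense]; trivial
    exact (hclosed.closure_subset_iff.mpr hpoly) hg
  exact this

lemma commute_cfc_aux {a b : H →L[ℂ] H} (hab : Commute b a) (f : ℝ → ℝ) :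
    Commute b (cfc f a) := by
  refine cfc_cases (fun x => Commute b x) a f (Commute.zero_right b) ?_
  intro hf ha'
  exact commute_cfcHom_aux hab ha' _

lemma isPositive_mul_of_commute {P Q : H →L[ℂ] H} (hP : P.IsPositive) (hQ : Q.IsPositive)
    (h : Commute P Q) : (P * Q).IsPositive := by
  set r := cfc Real.sqrt P with hr
  have hr_sa : IsSelfAdjoint r := cfc_predicate Real.sqrt P
  have hspec : ∀ x ∈ spectrum ℝ P, 0 ≤ x := by
    have h1 := hP.spectrumRestricts
    rw [SpectrumRestricts.nnreal_iff] at h1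
    exact h1
  have hrr : r * r = P := by
    rw [hr, ← cfc_mul Real.sqrt Real.sqrt P]
    rw [cfc_congr (g := fun x : ℝ => x) (fun x hx => Real.mul_self_sqrt (hspec x hx))]
    exact cfc_id' ℝ P hP.isSelfAdjoint
  have hcr : Commute Q r := commute_cfc_aux h.symm Real.sqrt
  have heq : P * Q = r ∘L Q ∘L ContinuousLinearMap.adjoint r := by
    rw [hr_sa.adjoint_eq]
    show P * Q = r * (Q * r)
    rw [hcr.eq, ← mul_assoc, hrr]
  rw [heq]
  exact hQ.conj_adjoint r

lemma isPositive_real_smul {X : H →L[ℂ] H} (hX : X.IsPositive) {c : ℝ} (hc : 0 ≤ c) :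
    ((c : ℂ) • X).IsPositive := by
  constructor
  · have hcsa : IsSelfAdjoint (c : ℂ) := by
      show star (c : ℂ) = c
      simpa [Complex.star_def] using Complex.conj_ofReal c
    exact isSelfAdjoint_iff_isSymmetric.mp (hcsa.smul hX.isSelfAdjoint)
  · intro x
    rw [reApplyInnerSelf_apply]
    simp only [smul_apply, inner_smul_left, Complex.conj_ofReal, RCLike.re_to_complex,
      Complex.re_ofReal_mul]
    exact mul_nonneg hc (by simpa [reApplyInnerSelf_apply, RCLike.re_to_complex] using hX.2 x)

lemma le_reInner {X Y : H →L[ℂ] H} (h : (Y - X).IsPositive) (f : H) :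
    (inner ℂ (X f) f : ℂ).re ≤ (inner ℂ (Y f) f : ℂ).re := by
  have h2 := h.2 f
  rw [reApplyInnerSelf_apply] at h2
  simp only [sub_apply, inner_sub_left, RCLike.re_to_complex, Complex.sub_re] at h2
  linarith

lemma isPositive_of' {X : H →L[ℂ] H} (hsa : IsSelfAdjoint X)
    (h : ∀ u : H, 0 ≤ (inner ℂ (X u) u : ℂ).re) : X.IsPositive := by
  refine ⟨isSelfAdjoint_iff_isSymmetric.mp hsa, fun u => ?_⟩
  rw [ContinuousLinearMap.reApplyInnerSelf_apply]
  simpa [RCLike.re_to_complex] using h u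

lemma sa_smul_one (c : ℝ) : IsSelfAdjoint ((c : ℂ) • (1 : H →L[ℂ] H)) := by
  have hcsa : IsSelfAdjoint (c : ℂ) := by
    show star (c : ℂ) = c
    simpa [Complex.star_def] using Complex.conj_ofReal c
  exact hcsa.smul (IsSelfAdjoint.one _)

lemma re_inner_smul_one (c : ℝ) (u : H) :
    (inner ℂ ((((c : ℂ) • (1 : H →L[ℂ] H))) u) u : ℂ).re = c * ‖u‖ ^ 2 := by
  have : ((c : ℂ) • (1 : H →L[ℂ] H)) u = (c : ℂ) • u := rfl
  rw [this, inner_smul_left, Complex.conj_ofReal, inner_self_eq_norm_sq_to_K]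
  push_cast
  simp [Complex.re_ofReal_mul, ← Complex.ofReal_pow]

end Helpers

set_option maxHeartbeats 1000000 in
/-- If `Λ` is a g-frame with bounds `A, B` and `C, C'` are positive invertible
operators commuting with each other and with the frame operator `S`, with
`m·I ≤ C ≤ M·I` and `m'·I ≤ C' ≤ M'·I`, then `Λ` is a `(C,C')`-controlled g-frame with
bounds `m m' A` and `M M' B`. -/
theorem gframe_is_CC'_controlled_gframe
    {H : Type*} [NormedAddCommGroup H] [InnerProductSpace ℂ H] [CompleteSpace H]
    {ι : Type*} [Countable ι]
    {G : ι → Type*} [∀ i, NormedAddCommGroup (G i)] [∀ i, InnerProductSpace ℂ (G i)]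
    [∀ i, CompleteSpace (G i)]
    (Λ : ∀ i, H →L[ℂ] G i)
    (C C' S : H →L[ℂ] H)
    (hC_sa : IsSelfAdjoint C) (hC'_sa : IsSelfAdjoint C')
    (hC_pos : ∀ f : H, f ≠ 0 → 0 < (inner ℂ (C f) f : ℂ).re)
    (hC'_pos : ∀ f : H, f ≠ 0 → 0 < (inner ℂ (C' f) f : ℂ).re)
    (hC_bij : Function.Bijective C) (hC'_bij : Function.Bijective C')
    (hS : ∀ f : H, HasSum (fun i => (ContinuousLinearMap.adjoint (Λ i)) (Λ i f)) (S f))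
    (hcomm₁ : C ∘L C' = C' ∘L C)
    (hcomm₂ : C ∘L S = S ∘L C)
    (hcomm₃ : C' ∘L S = S ∘L C')
    (A B m m' M M' : ℝ)
    (hA : 0 < A) (hB : 0 < B)
    (hm : 0 < m) (hmM : m ≤ M)
    (hm' : 0 < m') (hm'M' : m' ≤ M')
    (hC_lb : ∀ f : H, m * ‖f‖ ^ 2 ≤ (inner ℂ (C f) f : ℂ).re)
    (hC_ub : ∀ f : H, (inner ℂ (C f) f : ℂ).re ≤ M * ‖f‖ ^ 2)
    (hC'_lb : ∀ f : H, m' * ‖f‖ ^ 2 ≤ (inner ℂ (C' f) f : ℂ).re)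
    (hC'_ub : ∀ f : H, (inner ℂ (C' f) f : ℂ).re ≤ M' * ‖f‖ ^ 2)
    (hsum : ∀ f : H, Summable fun i => ‖Λ i f‖ ^ 2)
    (hlower : ∀ f : H, A * ‖f‖ ^ 2 ≤ ∑' i, ‖Λ i f‖ ^ 2)
    (hupper : ∀ f : H, ∑' i, ‖Λ i f‖ ^ 2 ≤ B * ‖f‖ ^ 2) :
    ∀ f : H, Summable (fun i => (inner ℂ (Λ i (C f)) (Λ i (C' f)) : ℂ)) ∧
      m * m' * A * ‖f‖ ^ 2 ≤ (∑' i, (inner ℂ (Λ i (C f)) (Λ i (C' f)) : ℂ)).re ∧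
      (∑' i, (inner ℂ (Λ i (C f)) (Λ i (C' f)) : ℂ)).re ≤ M * M' * B * ‖f‖ ^ 2 := by
  -- basic commutation facts, in terms of `*`
  have hCC' : Commute C C' := hcomm₁
  have hCS : Commute C S := hcomm₂
  have hC'S : Commute C' S := hcomm₃
  -- the inner product against S is the frame sum
  have hSnorm : ∀ u : H, (inner ℂ (S u) u : ℂ) = ((∑' i, ‖Λ i u‖ ^ 2 : ℝ) : ℂ) := by
    intro u
    have h1 : HasSum (fun i => (inner ℂ u ((ContinuousLinearMap.adjoint (Λ i)) (Λ i u)) : ℂ))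
        (inner ℂ u (S u)) := (hS u).mapL (innerSL ℂ u)
    have h2 : HasSum (fun i => ((‖Λ i u‖ ^ 2 : ℝ) : ℂ)) (inner ℂ u (S u)) := by
      have heq : ∀ i, (inner ℂ u ((ContinuousLinearMap.adjoint (Λ i)) (Λ i u)) : ℂ)
          = ((‖Λ i u‖ ^ 2 : ℝ) : ℂ) := by
        intro i
        rw [ContinuousLinearMap.adjoint_inner_right, inner_self_eq_norm_sq_to_K]
        norm_cast
      simpa [heq] using h1
    have h3 : HasSum (fun i => ((‖Λ i u‖ ^ 2 : ℝ) : ℂ)) (((∑' i, ‖Λ i u‖ ^ 2 : ℝ) : ℂ)) :=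
      (hsum u).hasSum.mapL Complex.ofRealCLM
    have h4 : (inner ℂ u (S u) : ℂ) = ((∑' i, ‖Λ i u‖ ^ 2 : ℝ) : ℂ) := h2.unique h3
    rw [← inner_conj_symm, h4, Complex.conj_ofReal]
  have hSre : ∀ u : H, (inner ℂ (S u) u : ℂ).re = ∑' i, ‖Λ i u‖ ^ 2 := by
    intro u; rw [hSnorm u, Complex.ofReal_re]
  -- S is self-adjoint
  have hS_sa : IsSelfAdjoint S := by
    rw [ContinuousLinearMap.isSelfAdjoint_iff_isSymmetric]
    rw [LinearMap.isSymmetric_iff_inner_map_self_real]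
    intro v
    show (starRingEnd ℂ) (inner ℂ (S v) v) = inner ℂ (S v) v
    rw [hSnorm v, Complex.conj_ofReal]
  -- positivity building blocks
  have posS_lb : (S - ((A : ℂ)) • 1).IsPositive := by
    refine isPositive_of' (hS_sa.sub (sa_smul_one A)) fun u => ?_
    have h1 : (inner ℂ ((S - (A : ℂ) • 1) u) u : ℂ).re
        = (inner ℂ (S u) u : ℂ).re - (inner ℂ (((A : ℂ) • (1 : H →L[ℂ] H)) u) u : ℂ).re := by
      simp [ContinuousLinearMap.sub_apply, inner_sub_left, Complex.sub_re]
    rw [h1, re_inner_smul_one, hSre]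
    have := hlower u
    linarith
  have posS_ub : (((B : ℂ)) • 1 - S).IsPositive := by
    refine isPositive_of' ((sa_smul_one B).sub hS_sa) fun u => ?_
    have h1 : (inner ℂ (((B : ℂ) • 1 - S) u) u : ℂ).re
        = (inner ℂ (((B : ℂ) • (1 : H →L[ℂ] H)) u) u : ℂ).re - (inner ℂ (S u) u : ℂ).re := by
      simp [ContinuousLinearMap.sub_apply, inner_sub_left, Complex.sub_re]
    rw [h1, re_inner_smul_one, hSre]
    have := hupper u
    linarith
  have posC : C.IsPositive := isPositive_of' hC_sa fun u => le_trans
    (by positivity) (hC_lb u)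
  have posC' : C'.IsPositive := isPositive_of' hC'_sa fun u => le_trans
    (by positivity) (hC'_lb u)
  have posC_lb : (C - ((m : ℂ)) • 1).IsPositive := by
    refine isPositive_of' (hC_sa.sub (sa_smul_one m)) fun u => ?_
    have h1 : (inner ℂ ((C - (m : ℂ) • 1) u) u : ℂ).re
        = (inner ℂ (C u) u : ℂ).re - (inner ℂ (((m : ℂ) • (1 : H →L[ℂ] H)) u) u : ℂ).re := by
      simp [ContinuousLinearMap.sub_apply, inner_sub_left, Complex.sub_re]
    rw [h1, re_inner_smul_one]
    have := hC_lb u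
    linarith
  have posC_ub : (((M : ℂ)) • 1 - C).IsPositive := by
    refine isPositive_of' ((sa_smul_one M).sub hC_sa) fun u => ?_
    have h1 : (inner ℂ (((M : ℂ) • 1 - C) u) u : ℂ).re
        = (inner ℂ (((M : ℂ) • (1 : H →L[ℂ] H)) u) u : ℂ).re - (inner ℂ (C u) u : ℂ).re := by
      simp [ContinuousLinearMap.sub_apply, inner_sub_left, Complex.sub_re]
    rw [h1, re_inner_smul_one]
    have := hC_ub u
    linarith
  have posC'_lb : (C' - ((m' : ℂ)) • 1).IsPositive := by
    refine isPositive_of' (hC'_sa.sub (sa_smul_one m')) fun u => ?_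
    have h1 : (inner ℂ ((C' - (m' : ℂ) • 1) u) u : ℂ).re
        = (inner ℂ (C' u) u : ℂ).re - (inner ℂ (((m' : ℂ) • (1 : H →L[ℂ] H)) u) u : ℂ).re := by
      simp [ContinuousLinearMap.sub_apply, inner_sub_left, Complex.sub_re]
    rw [h1, re_inner_smul_one]
    have := hC'_lb u
    linarith
  have posC'_ub : (((M' : ℂ)) • 1 - C').IsPositive := by
    refine isPositive_of' ((sa_smul_one M').sub hC'_sa) fun u => ?_
    have h1 : (inner ℂ (((M' : ℂ) • 1 - C') u) u : ℂ).re
        = (inner ℂ (((M' : ℂ) • (1 : H →L[ℂ] H)) u) u : ℂ).re - (inner ℂ (C' u) u : ℂ).re := by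
      simp [ContinuousLinearMap.sub_apply, inner_sub_left, Complex.sub_re]
    rw [h1, re_inner_smul_one]
    have := hC'_ub u
    linarith
  -- the operator representing the controlled frame sum
  have hT : C' * S * C = S * (C * C') := by
    rw [mul_assoc, ← mul_assoc, hC'S.eq, mul_assoc, ← hCC'.eq]
  -- lower positivity
  have posCC' : (C * C').IsPositive := isPositive_mul_of_commute posC posC' hCC'
  have lower_pos : ((C' * S * C) - ((m * m' * A : ℝ) : ℂ) • 1).IsPositive := by
    have hdecomp : (C' * S * C) - ((m * m' * A : ℝ) : ℂ) • 1
        = (S - (A : ℂ) • 1) * (C * C') + (A : ℂ) • (C * (C' - (m' : ℂ) • 1))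
          + ((A * m' : ℝ) : ℂ) • (C - (m : ℂ) • 1) := by
      rw [hT]
      push_cast
      simp only [sub_mul, mul_sub, smul_sub, smul_smul, smul_mul_assoc, one_mul, mul_one,
        mul_smul_comm]
      module
    rw [hdecomp]
    refine ContinuousLinearMap.IsPositive.add (ContinuousLinearMap.IsPositive.add ?_ ?_) ?_
    · exact isPositive_mul_of_commute posS_lb posCC'
        ((hCS.symm.mul_right hC'S.symm).sub_left (((Commute.one_left _).smul_left _)))
    · exact isPositive_real_smul (isPositive_mul_of_commute posC posC'_lb
        (hCC'.sub_right ((Commute.one_right C).smul_right _))) hA.le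
    · exact isPositive_real_smul posC_lb (mul_nonneg hA.le hm'.le)
  -- upper positivity
  have upper_pos : (((M * M' * B : ℝ) : ℂ) • 1 - (C' * S * C)).IsPositive := by
    have hdecomp : ((M * M' * B : ℝ) : ℂ) • 1 - (C' * S * C)
        = ((B : ℂ) • 1 - S) * (C * C') + (B : ℂ) • (C * ((M' : ℂ) • 1 - C'))
          + ((B * M' : ℝ) : ℂ) • ((M : ℂ) • 1 - C) := by
      rw [hT]
      push_cast
      simp only [sub_mul, mul_sub, smul_sub, smul_smul, smul_mul_assoc, one_mul, mul_one,
        mul_smul_comm]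
      module
    rw [hdecomp]
    refine ContinuousLinearMap.IsPositive.add (ContinuousLinearMap.IsPositive.add ?_ ?_) ?_
    · exact isPositive_mul_of_commute posS_ub posCC'
        ((((Commute.one_left (C * C')).smul_left _)).sub_left (hCS.symm.mul_right hC'S.symm))
    · exact isPositive_real_smul (isPositive_mul_of_commute posC posC'_ub
        (((Commute.one_right C).smul_right _).sub_right hCC')) hB.le
    · exact isPositive_real_smul posC_ub (mul_nonneg hB.le (hm'.trans_le hm'M').le)
  -- now the statement for each f
  intro f
  have hhasSum : HasSum (fun i => (inner ℂ (Λ i (C f)) (Λ i (C' f)) : ℂ))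
      (inner ℂ (S (C f)) (C' f)) := by
    have h1 : HasSum (fun i => (inner ℂ (C' f) ((ContinuousLinearMap.adjoint (Λ i)) (Λ i (C f))) : ℂ))
        (inner ℂ (C' f) (S (C f))) := (hS (C f)).mapL (innerSL ℂ (C' f))
    have h2 := h1.star
    have heq : ∀ i, star (inner ℂ (C' f) ((ContinuousLinearMap.adjoint (Λ i)) (Λ i (C f))) : ℂ)
        = (inner ℂ (Λ i (C f)) (Λ i (C' f)) : ℂ) := by
      intro i
      rw [ContinuousLinearMap.adjoint_inner_right]
      exact inner_conj_symm _ _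
    have heq2 : star (inner ℂ (C' f) (S (C f)) : ℂ) = inner ℂ (S (C f)) (C' f) :=
      inner_conj_symm _ _
    rw [heq2] at h2
    exact h2.congr_fun fun i => (heq i).symm
  have hre_eq : (∑' i, (inner ℂ (Λ i (C f)) (Λ i (C' f)) : ℂ)).re
      = (inner ℂ ((C' * S * C) f) f : ℂ).re := by
    rw [hhasSum.tsum_eq]
    have : (inner ℂ (S (C f)) (C' f) : ℂ) = inner ℂ ((C' * S * C) f) f := by
      rw [← ContinuousLinearMap.adjoint_inner_left C', hC'_sa.adjoint_eq]
      rfl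
    rw [this]
  refine ⟨hhasSum.summable, ?_, ?_⟩
  · have h := le_reInner lower_pos f
    rw [re_inner_smul_one] at h
    rw [hre_eq]
    linarith
  · have h := le_reInner upper_pos f
    rw [re_inner_smul_one] at h
    rw [hre_eq]
    linarith
end

section
/- A family Λ = (Λ_i)_{i∈I} of bounded linear operators Λ_i : H → H_i is a g-Bessel sequence for H with bound B if and only if for every g = (g_i)_{i∈I} in the Hilbert space (⊕_{i∈I} H_i)_{ℓ²} the family (Λ_i*(g_i))_{i∈I} is summable in H and the synthesis operator T_Λ(g) = ∑_{i∈I} Λ_i*(g_i) satisfies ‖T_Λ(g)‖ ≤ √B ‖g‖ for all g ∈ (⊕_{i∈I} H_i)_{ℓ²}. -/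
open scoped InnerProductSpace ENNReal

-- helper: squared norm hasSum for lp 2
lemma lp2_hasSum_sq {ι : Type*} {G : ι → Type*} [∀ i, NormedAddCommGroup (G i)]
    (g : lp G 2) : HasSum (fun i => ‖g i‖ ^ 2) (‖g‖ ^ 2) := by
  have h := lp.hasSum_norm (p := 2) (by norm_num) g
  have h2 : (2 : ℝ≥0∞).toReal = (2 : ℕ) := by norm_num
  simpa [h2, Real.rpow_natCast] using h

local notation "⟪" x ", " y "⟫" => @inner ℂ _ _ x y

-- finite synthesis bound
lemma finite_synth_bound
    {H : Type*} [NormedAddCommGroup H] [InnerProductSpace ℂ H] [CompleteSpace H]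
    {ι : Type*}
    {G : ι → Type*} [∀ i, NormedAddCommGroup (G i)] [∀ i, InnerProductSpace ℂ (G i)]
    [∀ i, CompleteSpace (G i)]
    (Λ : ∀ i, H →L[ℂ] G i) (B : ℝ) (hB : 0 ≤ B)
    (h1 : ∀ f : H, Summable fun i => ‖Λ i f‖ ^ 2)
    (h2 : ∀ f : H, ∑' i, ‖Λ i f‖ ^ 2 ≤ B * ‖f‖ ^ 2)
    (F : Finset ι) (c : ∀ i, G i) :
    ‖∑ i ∈ F, (ContinuousLinearMap.adjoint (Λ i)) (c i)‖ ≤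
      Real.sqrt B * Real.sqrt (∑ i ∈ F, ‖c i‖ ^ 2) := by
  set v := ∑ i ∈ F, (ContinuousLinearMap.adjoint (Λ i)) (c i) with hv
  have hsq : ‖v‖ ^ 2 = RCLike.re ⟪v, v⟫ := (inner_self_eq_norm_sq (𝕜 := ℂ) v).symm
  have hinner : ⟪v, v⟫ = ∑ i ∈ F, ⟪c i, Λ i v⟫ := by
    rw [hv, sum_inner]
    refine Finset.sum_congr rfl fun i _ => ?_
    exact ContinuousLinearMap.adjoint_inner_left (Λ i) v (c i)
  have hre : ‖v‖ ^ 2 ≤ ∑ i ∈ F, ‖c i‖ * ‖Λ i v‖ := by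
    rw [hsq, hinner, map_sum]
    refine Finset.sum_le_sum fun i _ => ?_
    calc RCLike.re ⟪c i, Λ i v⟫ ≤ ‖⟪c i, Λ i v⟫‖ := RCLike.re_le_norm _
      _ ≤ ‖c i‖ * ‖Λ i v‖ := norm_inner_le_norm _ _
  have hCS : (∑ i ∈ F, ‖c i‖ * ‖Λ i v‖) ^ 2 ≤
      (∑ i ∈ F, ‖c i‖ ^ 2) * ∑ i ∈ F, ‖Λ i v‖ ^ 2 :=
    Finset.sum_mul_sq_le_sq_mul_sq F _ _
  have hsum_le : ∑ i ∈ F, ‖Λ i v‖ ^ 2 ≤ B * ‖v‖ ^ 2 :=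
    (Summable.sum_le_tsum F (fun i _ => sq_nonneg _) (h1 v)).trans (h2 v)
  have hcnn : (0:ℝ) ≤ ∑ i ∈ F, ‖c i‖ ^ 2 := Finset.sum_nonneg fun i _ => sq_nonneg _
  have hmid : ∑ i ∈ F, ‖c i‖ * ‖Λ i v‖ ≤
      Real.sqrt (∑ i ∈ F, ‖c i‖ ^ 2) * (Real.sqrt B * ‖v‖) := by
    have hnn : (0:ℝ) ≤ ∑ i ∈ F, ‖c i‖ * ‖Λ i v‖ :=
      Finset.sum_nonneg fun i _ => mul_nonneg (norm_nonneg _) (norm_nonneg _)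
    have := Real.sqrt_le_sqrt (hCS.trans (by nlinarith [sq_nonneg (‖v‖)] :
      (∑ i ∈ F, ‖c i‖ ^ 2) * ∑ i ∈ F, ‖Λ i v‖ ^ 2 ≤ (∑ i ∈ F, ‖c i‖ ^ 2) * (B * ‖v‖ ^ 2)))
    rw [Real.sqrt_sq hnn] at this
    calc ∑ i ∈ F, ‖c i‖ * ‖Λ i v‖ ≤ Real.sqrt ((∑ i ∈ F, ‖c i‖ ^ 2) * (B * ‖v‖ ^ 2)) := this
      _ = Real.sqrt (∑ i ∈ F, ‖c i‖ ^ 2) * (Real.sqrt B * ‖v‖) := by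
          rw [Real.sqrt_mul hcnn, Real.sqrt_mul hB, Real.sqrt_sq (norm_nonneg _)]
  have key : ‖v‖ ^ 2 ≤ Real.sqrt (∑ i ∈ F, ‖c i‖ ^ 2) * (Real.sqrt B * ‖v‖) :=
    hre.trans hmid
  rcases eq_or_lt_of_le (norm_nonneg v) with h0 | h0
  · rw [← h0]
    positivity
  · have := (mul_le_mul_iff_of_pos_right h0).mp (by nlinarith [key] : ‖v‖ * ‖v‖ ≤
      (Real.sqrt B * Real.sqrt (∑ i ∈ F, ‖c i‖ ^ 2)) * ‖v‖)
    linarith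

lemma forward_summable
    {H : Type*} [NormedAddCommGroup H] [InnerProductSpace ℂ H] [CompleteSpace H]
    {ι : Type*}
    {G : ι → Type*} [∀ i, NormedAddCommGroup (G i)] [∀ i, InnerProductSpace ℂ (G i)]
    [∀ i, CompleteSpace (G i)]
    (Λ : ∀ i, H →L[ℂ] G i) (B : ℝ) (hB : 0 ≤ B)
    (h1 : ∀ f : H, Summable fun i => ‖Λ i f‖ ^ 2)
    (h2 : ∀ f : H, ∑' i, ‖Λ i f‖ ^ 2 ≤ B * ‖f‖ ^ 2)
    (g : lp G 2) :
    Summable (fun i => (ContinuousLinearMap.adjoint (Λ i)) (g i)) := by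
  rw [summable_iff_vanishing_norm]
  intro ε hε
  have hgsum : Summable (fun i => ‖g i‖ ^ 2) := (lp2_hasSum_sq g).summable
  have hε' : (0:ℝ) < ε ^ 2 / (B + 1) := by positivity
  obtain ⟨s, hs⟩ := summable_iff_vanishing_norm.1 hgsum (ε ^ 2 / (B + 1)) hε'
  refine ⟨s, fun t ht => ?_⟩
  have hts : ∑ i ∈ t, ‖g i‖ ^ 2 < ε ^ 2 / (B + 1) := by
    have := hs t ht
    rwa [Real.norm_of_nonneg (Finset.sum_nonneg fun i _ => sq_nonneg _)] at this
  have htnn : (0:ℝ) ≤ ∑ i ∈ t, ‖g i‖ ^ 2 := Finset.sum_nonneg fun i _ => sq_nonneg _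
  have hBs : B * (∑ i ∈ t, ‖g i‖ ^ 2) < ε ^ 2 := by
    have h3 : (B + 1) * (∑ i ∈ t, ‖g i‖ ^ 2) < (B + 1) * (ε ^ 2 / (B + 1)) :=
      mul_lt_mul_of_pos_left hts (by linarith)
    have h4 : (B + 1) * (ε ^ 2 / (B + 1)) = ε ^ 2 := by
      field_simp
    nlinarith
  calc ‖∑ i ∈ t, (ContinuousLinearMap.adjoint (Λ i)) (g i)‖
      ≤ Real.sqrt B * Real.sqrt (∑ i ∈ t, ‖g i‖ ^ 2) :=
        finite_synth_bound Λ B hB h1 h2 t _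
    _ = Real.sqrt (B * (∑ i ∈ t, ‖g i‖ ^ 2)) := (Real.sqrt_mul hB _).symm
    _ < Real.sqrt (ε ^ 2) := Real.sqrt_lt_sqrt (by positivity) hBs
    _ = ε := by rw [Real.sqrt_sq hε.le]

lemma forward_bound
    {H : Type*} [NormedAddCommGroup H] [InnerProductSpace ℂ H] [CompleteSpace H]
    {ι : Type*}
    {G : ι → Type*} [∀ i, NormedAddCommGroup (G i)] [∀ i, InnerProductSpace ℂ (G i)]
    [∀ i, CompleteSpace (G i)]
    (Λ : ∀ i, H →L[ℂ] G i) (B : ℝ) (hB : 0 ≤ B)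
    (h1 : ∀ f : H, Summable fun i => ‖Λ i f‖ ^ 2)
    (h2 : ∀ f : H, ∑' i, ‖Λ i f‖ ^ 2 ≤ B * ‖f‖ ^ 2)
    (g : lp G 2) :
    ‖∑' i, (ContinuousLinearMap.adjoint (Λ i)) (g i)‖ ≤ Real.sqrt B * ‖g‖ := by
  have hsum := forward_summable Λ B hB h1 h2 g
  have hv := hsum.hasSum
  refine le_of_tendsto' hv.norm fun F => ?_
  calc ‖∑ i ∈ F, (ContinuousLinearMap.adjoint (Λ i)) (g i)‖
      ≤ Real.sqrt B * Real.sqrt (∑ i ∈ F, ‖g i‖ ^ 2) :=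
        finite_synth_bound Λ B hB h1 h2 F _
    _ ≤ Real.sqrt B * ‖g‖ := by
        refine mul_le_mul_of_nonneg_left ?_ (Real.sqrt_nonneg _)
        have hle : ∑ i ∈ F, ‖g i‖ ^ 2 ≤ ‖g‖ ^ 2 :=
          sum_le_hasSum F (fun i _ => sq_nonneg _) (lp2_hasSum_sq g)
        calc Real.sqrt (∑ i ∈ F, ‖g i‖ ^ 2) ≤ Real.sqrt (‖g‖ ^ 2) := Real.sqrt_le_sqrt hle
          _ = ‖g‖ := Real.sqrt_sq (norm_nonneg _)

lemma backward_key
    {H : Type*} [NormedAddCommGroup H] [InnerProductSpace ℂ H] [CompleteSpace H]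
    {ι : Type*}
    {G : ι → Type*} [∀ i, NormedAddCommGroup (G i)] [∀ i, InnerProductSpace ℂ (G i)]
    [∀ i, CompleteSpace (G i)]
    (Λ : ∀ i, H →L[ℂ] G i) (B : ℝ) (hB : 0 ≤ B)
    (hsyn : ∀ g : lp G 2,
        Summable (fun i => (ContinuousLinearMap.adjoint (Λ i)) (g i)) ∧
        ‖∑' i, (ContinuousLinearMap.adjoint (Λ i)) (g i)‖ ≤ Real.sqrt B * ‖g‖)
    (f : H) (F : Finset ι) :
    ∑ i ∈ F, ‖Λ i f‖ ^ 2 ≤ B * ‖f‖ ^ 2 := by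
  classical
  set gF : lp G 2 := ∑ i ∈ F, lp.single 2 i (Λ i f) with hgF
  set S : ℝ := ∑ i ∈ F, ‖Λ i f‖ ^ 2 with hS
  have hSnn : 0 ≤ S := Finset.sum_nonneg fun i _ => sq_nonneg _
  have hcoord : ∀ j, gF j = if j ∈ F then Λ j f else 0 := by
    intro j
    simp only [hgF, lp.coeFn_sum, Finset.sum_apply, lp.single_apply, Finset.sum_dite_eq, Finset.sum_pi_single]
  have hnorm2 : ‖gF‖ ^ 2 = S := by
    have h := lp.norm_sum_single (p := 2) (by norm_num) (fun i => Λ i f) F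
    have h2 : (2 : ℝ≥0∞).toReal = (2 : ℕ) := by norm_num
    rw [h2] at h
    simpa [Real.rpow_natCast] using h
  have hgnorm : ‖gF‖ = Real.sqrt S := by
    rw [← hnorm2, Real.sqrt_sq (norm_nonneg _)]
  obtain ⟨hs, hb⟩ := hsyn gF
  set v := ∑' i, (ContinuousLinearMap.adjoint (Λ i)) (gF i) with hvdef
  have hterm : ∀ j, ⟪f, (ContinuousLinearMap.adjoint (Λ j)) (gF j)⟫ =
      if j ∈ F then ((‖Λ j f‖ : ℂ)) ^ 2 else 0 := by
    intro j
    rw [ContinuousLinearMap.adjoint_inner_right, hcoord j]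
    split
    · exact inner_self_eq_norm_sq_to_K _
    · simp
  have hinner : ⟪f, v⟫ = (S : ℂ) := by
    have hmap := ((innerSL ℂ f).hasSum hs.hasSum).tsum_eq
    simp only [innerSL_apply_apply] at hmap
    rw [← hmap]
    rw [tsum_eq_sum (s := F) (fun j hj => by rw [hterm j, if_neg hj])]
    rw [hS]
    push_cast
    exact Finset.sum_congr rfl fun j hj => by rw [hterm j, if_pos hj]
  have hSle : S ≤ Real.sqrt B * ‖f‖ * Real.sqrt S := by
    have h1 : S = ‖⟪f, v⟫‖ := by
      rw [hinner, Complex.norm_real, Real.norm_of_nonneg hSnn]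
    have h2 : ‖⟪f, v⟫‖ ≤ ‖f‖ * ‖v‖ := norm_inner_le_norm _ _
    have h3 : ‖v‖ ≤ Real.sqrt B * Real.sqrt S := by rw [← hgnorm]; exact hb
    calc S = ‖⟪f, v⟫‖ := h1
      _ ≤ ‖f‖ * ‖v‖ := h2
      _ ≤ ‖f‖ * (Real.sqrt B * Real.sqrt S) := by
          exact mul_le_mul_of_nonneg_left h3 (norm_nonneg _)
      _ = Real.sqrt B * ‖f‖ * Real.sqrt S := by ring
  have ha : Real.sqrt S ^ 2 = S := Real.sq_sqrt hSnn
  have hbb : Real.sqrt B ^ 2 = B := Real.sq_sqrt hB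
  nlinarith [sq_nonneg (Real.sqrt S - Real.sqrt B * ‖f‖), Real.sqrt_nonneg S,
    Real.sqrt_nonneg B, norm_nonneg f]




/-- `Λ` is a g-Bessel sequence with bound `B` iff the synthesis operator
`T_Λ(g) = ∑ᵢ Λᵢ*(gᵢ)` is well defined on `(⊕ᵢ Hᵢ)_{ℓ²}` with `‖T_Λ g‖ ≤ √B ‖g‖`. -/
theorem gBessel_iff_synthesis_wellDefined_bounded
    {H : Type*} [NormedAddCommGroup H] [InnerProductSpace ℂ H] [CompleteSpace H]
    {ι : Type*} [Countable ι]
    {G : ι → Type*} [∀ i, NormedAddCommGroup (G i)] [∀ i, InnerProductSpace ℂ (G i)]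
    [∀ i, CompleteSpace (G i)]
    (Λ : ∀ i, H →L[ℂ] G i)
    (B : ℝ) (hB : 0 ≤ B) :
    ((∀ f : H, Summable fun i => ‖Λ i f‖ ^ 2) ∧
        ∀ f : H, ∑' i, ‖Λ i f‖ ^ 2 ≤ B * ‖f‖ ^ 2) ↔
      ∀ g : lp G 2,
        Summable (fun i => (ContinuousLinearMap.adjoint (Λ i)) (g i)) ∧
        ‖∑' i, (ContinuousLinearMap.adjoint (Λ i)) (g i)‖ ≤ Real.sqrt B * ‖g‖ := by
  constructor
  · rintro ⟨h1, h2⟩ g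
    exact ⟨forward_summable Λ B hB h1 h2 g, forward_bound Λ B hB h1 h2 g⟩
  · intro hsyn
    have key : ∀ (f : H) (F : Finset ι), ∑ i ∈ F, ‖Λ i f‖ ^ 2 ≤ B * ‖f‖ ^ 2 :=
      fun f F => backward_key Λ B hB hsyn f F
    have hsum : ∀ f : H, Summable fun i => ‖Λ i f‖ ^ 2 := fun f =>
      summable_of_sum_le (fun i => sq_nonneg _) (key f)
    exact ⟨hsum, fun f => Summable.tsum_le_of_sum_le (hsum f) (key f)⟩
end

section
/- A family Λ = (Λ_i)_{i∈I} of bounded linear operators Λ_i : H → H_i is a g-Bessel sequence for H (i.e. there exists B < ∞ with ∑_{i∈I} ‖Λ_i f‖² ≤ B‖f‖² for all f ∈ H) if and only if for every f ∈ H the family (Λ_i*(Λ_i f))_{i∈I} is summable in H. In this case the operator S_Λ : H → H, S_Λ f = ∑_{i∈I} Λ_i*Λ_i f, is bounded. -/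
open scoped InnerProductSpace
open ContinuousLinearMap

section Aux

variable {H : Type*} [NormedAddCommGroup H] [InnerProductSpace ℂ H] [CompleteSpace H]
    {ι : Type*}
    {G : ι → Type*} [∀ i, NormedAddCommGroup (G i)] [∀ i, InnerProductSpace ℂ (G i)]
    [∀ i, CompleteSpace (G i)]

/-- inner product of a partial sum of `Λᵢ*Λᵢ f` against `g`. -/
lemma gBessel_aux_inner (Λ : ∀ i, H →L[ℂ] G i) (F : Finset ι) (f g : H) :
    ⟪∑ i ∈ F, (ContinuousLinearMap.adjoint (Λ i)) (Λ i f), g⟫_ℂ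
      = ∑ i ∈ F, ⟪Λ i f, Λ i g⟫_ℂ := by
  rw [sum_inner]
  exact Finset.sum_congr rfl fun i _ => ContinuousLinearMap.adjoint_inner_left _ _ _

/-- Norm bound on partial sums from the Bessel condition. -/
lemma gBessel_aux_normBound (Λ : ∀ i, H →L[ℂ] G i) {B : ℝ} (hB0 : 0 ≤ B)
    (hB : ∀ f : H, Summable (fun i => ‖Λ i f‖ ^ 2) ∧
        ∑' i, ‖Λ i f‖ ^ 2 ≤ B * ‖f‖ ^ 2)
    (t : Finset ι) (f : H) :
    ‖∑ i ∈ t, (ContinuousLinearMap.adjoint (Λ i)) (Λ i f)‖ ≤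
      Real.sqrt (∑ i ∈ t, ‖Λ i f‖ ^ 2) * Real.sqrt B := by
  set g := ∑ i ∈ t, (ContinuousLinearMap.adjoint (Λ i)) (Λ i f) with hg
  have h1 : ‖g‖ ^ 2 = RCLike.re (⟪g, g⟫_ℂ) := (inner_self_eq_norm_sq g).symm
  have h2 : ⟪g, g⟫_ℂ = ∑ i ∈ t, ⟪Λ i f, Λ i g⟫_ℂ := gBessel_aux_inner Λ t f g
  have h3 : ‖g‖ ^ 2 ≤ ∑ i ∈ t, ‖Λ i f‖ * ‖Λ i g‖ := by
    rw [h1, h2, map_sum]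
    refine Finset.sum_le_sum fun i _ => ?_
    exact (RCLike.re_le_norm _).trans (norm_inner_le_norm _ _)
  have h4 : ∑ i ∈ t, ‖Λ i f‖ * ‖Λ i g‖ ≤
      Real.sqrt (∑ i ∈ t, ‖Λ i f‖ ^ 2) * Real.sqrt (∑ i ∈ t, ‖Λ i g‖ ^ 2) :=
    Real.sum_mul_le_sqrt_mul_sqrt _ _ _
  have h5 : ∑ i ∈ t, ‖Λ i g‖ ^ 2 ≤ B * ‖g‖ ^ 2 := by
    refine le_trans ?_ (hB g).2
    exact Summable.sum_le_tsum t (fun i _ => sq_nonneg _) (hB g).1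
  have h6 : Real.sqrt (∑ i ∈ t, ‖Λ i g‖ ^ 2) ≤ Real.sqrt B * ‖g‖ := by
    have := Real.sqrt_le_sqrt h5
    rwa [Real.sqrt_mul hB0, Real.sqrt_sq (norm_nonneg g)] at this
  have key : ‖g‖ ^ 2 ≤ Real.sqrt (∑ i ∈ t, ‖Λ i f‖ ^ 2) * Real.sqrt B * ‖g‖ := by
    calc ‖g‖ ^ 2 ≤ ∑ i ∈ t, ‖Λ i f‖ * ‖Λ i g‖ := h3
      _ ≤ Real.sqrt (∑ i ∈ t, ‖Λ i f‖ ^ 2) * Real.sqrt (∑ i ∈ t, ‖Λ i g‖ ^ 2) := h4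
      _ ≤ Real.sqrt (∑ i ∈ t, ‖Λ i f‖ ^ 2) * (Real.sqrt B * ‖g‖) := by
          exact mul_le_mul_of_nonneg_left h6 (Real.sqrt_nonneg _)
      _ = Real.sqrt (∑ i ∈ t, ‖Λ i f‖ ^ 2) * Real.sqrt B * ‖g‖ := by ring
  rcases eq_or_lt_of_le (norm_nonneg g) with h | h
  · rw [← h]; positivity
  · rw [pow_two] at key
    exact le_of_mul_le_mul_right key h

/-- Uniform bound on partial-sum operators via Banach–Steinhaus. -/
lemma gBessel_aux_uniform (Λ : ∀ i, H →L[ℂ] G i)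
    (hsum : ∀ f : H, Summable fun i => (ContinuousLinearMap.adjoint (Λ i)) (Λ i f)) :
    ∃ C : ℝ, 0 ≤ C ∧ ∀ (F : Finset ι) (f : H),
      ‖∑ i ∈ F, (ContinuousLinearMap.adjoint (Λ i)) (Λ i f)‖ ≤ C * ‖f‖ := by
  classical
  set T : Finset ι → H →L[ℂ] H :=
    fun F => ∑ i ∈ F, (ContinuousLinearMap.adjoint (Λ i)).comp (Λ i) with hT
  have hTapp : ∀ (F : Finset ι) (f : H),
      T F f = ∑ i ∈ F, (ContinuousLinearMap.adjoint (Λ i)) (Λ i f) := by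
    intro F f
    simp [hT, ContinuousLinearMap.sum_apply]
  have hpt : ∀ f : H, ∃ Cf : ℝ, ∀ F : Finset ι, ‖T F f‖ ≤ Cf := by
    intro f
    obtain ⟨s, hs⟩ := summable_iff_vanishing_norm.mp (hsum f) 1 one_pos
    refine ⟨(∑ i ∈ s, ‖(ContinuousLinearMap.adjoint (Λ i)) (Λ i f)‖) + 1, fun F => ?_⟩
    rw [hTapp]
    have hsplit : ∑ i ∈ F, (ContinuousLinearMap.adjoint (Λ i)) (Λ i f)
        = (∑ i ∈ F ∩ s, (ContinuousLinearMap.adjoint (Λ i)) (Λ i f))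
          + ∑ i ∈ F \ s, (ContinuousLinearMap.adjoint (Λ i)) (Λ i f) :=
      (Finset.sum_inter_add_sum_sdiff F s _).symm
    rw [hsplit]
    refine (norm_add_le _ _).trans (add_le_add ?_ ?_)
    · refine (norm_sum_le _ _).trans ?_
      exact Finset.sum_le_sum_of_subset_of_nonneg (Finset.inter_subset_right)
        (fun i _ _ => norm_nonneg _)
    · exact (hs _ Finset.sdiff_disjoint).le
  obtain ⟨C', hC'⟩ := banach_steinhaus hpt
  refine ⟨max C' 0, le_max_right _ _, fun F f => ?_⟩
  rw [← hTapp]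
  calc ‖T F f‖ ≤ ‖T F‖ * ‖f‖ := (T F).le_opNorm f
    _ ≤ max C' 0 * ‖f‖ :=
      mul_le_mul_of_nonneg_right ((hC' F).trans (le_max_left _ _)) (norm_nonneg f)

end Aux

/-- `Λ` is a g-Bessel sequence for `H` iff for every `f ∈ H` the family
`(Λᵢ*(Λᵢ f))ᵢ` is summable in `H`; in this case the operator `S_Λ f = ∑ᵢ Λᵢ*Λᵢ f`
is bounded. -/
theorem gBessel_iff_frameOperator_wellDefined
    {H : Type*} [NormedAddCommGroup H] [InnerProductSpace ℂ H] [CompleteSpace H]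
    {ι : Type*} [Countable ι]
    {G : ι → Type*} [∀ i, NormedAddCommGroup (G i)] [∀ i, InnerProductSpace ℂ (G i)]
    [∀ i, CompleteSpace (G i)]
    (Λ : ∀ i, H →L[ℂ] G i) :
    ((∃ B : ℝ, ∀ f : H, Summable (fun i => ‖Λ i f‖ ^ 2) ∧
        ∑' i, ‖Λ i f‖ ^ 2 ≤ B * ‖f‖ ^ 2) ↔
      ∀ f : H, Summable fun i => (ContinuousLinearMap.adjoint (Λ i)) (Λ i f)) ∧
    ((∀ f : H, Summable fun i => (ContinuousLinearMap.adjoint (Λ i)) (Λ i f)) →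
      ∃ S : H →L[ℂ] H, ∀ f : H,
        S f = ∑' i, (ContinuousLinearMap.adjoint (Λ i)) (Λ i f)) := by
  have mkS : (∀ f : H, Summable fun i => (ContinuousLinearMap.adjoint (Λ i)) (Λ i f)) →
      ∃ S : H →L[ℂ] H, ∀ f : H,
        S f = ∑' i, (ContinuousLinearMap.adjoint (Λ i)) (Λ i f) := by
    intro hsum
    obtain ⟨C, hC0, hC⟩ := gBessel_aux_uniform Λ hsum
    have hbound : ∀ f : H, ‖∑' i, (ContinuousLinearMap.adjoint (Λ i)) (Λ i f)‖ ≤ C * ‖f‖ := by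
      intro f
      refine le_of_tendsto ((hsum f).hasSum.norm) (Filter.Eventually.of_forall fun F => hC F f)
    refine ⟨LinearMap.mkContinuous
      { toFun := fun f => ∑' i, (ContinuousLinearMap.adjoint (Λ i)) (Λ i f)
        map_add' := by
          intro f g
          simp only [map_add]
          exact Summable.tsum_add (hsum f) (hsum g)
        map_smul' := by
          intro c f
          simp only [map_smul, RingHom.id_apply]
          exact Summable.tsum_const_smul c (hsum f) } C hbound, fun f => rfl⟩
  refine ⟨⟨?_, ?_⟩, mkS⟩
  · rintro ⟨B, hB⟩ f
    set B' := max B 0 with hB'def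
    have hB'0 : 0 ≤ B' := le_max_right _ _
    have hB' : ∀ g : H, Summable (fun i => ‖Λ i g‖ ^ 2) ∧
        ∑' i, ‖Λ i g‖ ^ 2 ≤ B' * ‖g‖ ^ 2 := by
      intro g
      refine ⟨(hB g).1, (hB g).2.trans ?_⟩
      exact mul_le_mul_of_nonneg_right (le_max_left _ _) (sq_nonneg _)
    rw [summable_iff_vanishing_norm]
    intro ε hε
    set δ : ℝ := ε ^ 2 / (B' + 1) with hδdef
    have hδ : 0 < δ := div_pos (by positivity) (by linarith)
    obtain ⟨s, hs⟩ := summable_iff_vanishing_norm.mp (hB f).1 δ hδ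
    refine ⟨s, fun t ht => ?_⟩
    have htail : ∑ i ∈ t, ‖Λ i f‖ ^ 2 < δ := by
      have := hs t ht
      rwa [Real.norm_of_nonneg (Finset.sum_nonneg fun i _ => sq_nonneg _)] at this
    calc ‖∑ i ∈ t, (ContinuousLinearMap.adjoint (Λ i)) (Λ i f)‖
        ≤ Real.sqrt (∑ i ∈ t, ‖Λ i f‖ ^ 2) * Real.sqrt B' :=
          gBessel_aux_normBound Λ hB'0 hB' t f
      _ = Real.sqrt ((∑ i ∈ t, ‖Λ i f‖ ^ 2) * B') :=
          (Real.sqrt_mul (Finset.sum_nonneg fun i _ => sq_nonneg _) _).symm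
      _ < ε := by
          have h1 : (∑ i ∈ t, ‖Λ i f‖ ^ 2) * B' < ε ^ 2 := by
            have h2 : (∑ i ∈ t, ‖Λ i f‖ ^ 2) * B' ≤ δ * B' :=
              mul_le_mul_of_nonneg_right htail.le hB'0
            have h3 : δ * B' < ε ^ 2 := by
              rw [hδdef, div_mul_eq_mul_div, div_lt_iff₀ (by linarith : (0:ℝ) < B' + 1)]
              nlinarith [sq_nonneg ε, hε]
            linarith
          calc Real.sqrt ((∑ i ∈ t, ‖Λ i f‖ ^ 2) * B') < Real.sqrt (ε ^ 2) := by
                refine (Real.sqrt_lt_sqrt ?_ h1)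
                positivity
            _ = ε := Real.sqrt_sq hε.le
  · intro hsum
    obtain ⟨C, hC0, hC⟩ := gBessel_aux_uniform Λ hsum
    have key : ∀ (f : H) (F : Finset ι), ∑ i ∈ F, ‖Λ i f‖ ^ 2 ≤ C * ‖f‖ ^ 2 := by
      intro f F
      have h1 : (∑ i ∈ F, ‖Λ i f‖ ^ 2 : ℝ)
          = RCLike.re (⟪∑ i ∈ F, (ContinuousLinearMap.adjoint (Λ i)) (Λ i f), f⟫_ℂ) := by
        rw [gBessel_aux_inner, map_sum]
        exact (Finset.sum_congr rfl fun i _ => (inner_self_eq_norm_sq (Λ i f)).symm)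
      rw [h1]
      calc RCLike.re (⟪∑ i ∈ F, (ContinuousLinearMap.adjoint (Λ i)) (Λ i f), f⟫_ℂ)
          ≤ ‖(⟪∑ i ∈ F, (ContinuousLinearMap.adjoint (Λ i)) (Λ i f), f⟫_ℂ)‖ :=
            RCLike.re_le_norm _
        _ ≤ ‖∑ i ∈ F, (ContinuousLinearMap.adjoint (Λ i)) (Λ i f)‖ * ‖f‖ :=
            norm_inner_le_norm _ _
        _ ≤ C * ‖f‖ * ‖f‖ := mul_le_mul_of_nonneg_right (hC F f) (norm_nonneg f)
        _ = C * ‖f‖ ^ 2 := by ring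
    refine ⟨C, fun f => ?_⟩
    have hsummable : Summable (fun i => ‖Λ i f‖ ^ 2) :=
      summable_of_sum_le (fun i => sq_nonneg _) (key f)
    exact ⟨hsummable, Summable.tsum_le_of_sum_le hsummable (key f)⟩
end

section
/- A family Λ = (Λ_i)_{i∈I} of bounded linear operators Λ_i : H → H_i is a g-frame for H (i.e. there exist 0 < A ≤ B < ∞ with A‖f‖² ≤ ∑_{i∈I} ‖Λ_i f‖² ≤ B‖f‖² for all f ∈ H) if and only if for every f ∈ H the family (Λ_i*(Λ_i f))_{i∈I} is summable in H and the resulting operator S_Λ : H → H, S_Λ f = ∑_{i∈I} Λ_i*Λ_i f, is bijective. In this case S_Λ is bounded. -/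
open Filter Topology ContinuousLinearMap Finset RCLike

local notation "⟪" x ", " y "⟫" => @inner ℂ _ _ x y

section aux
variable {H : Type*} [NormedAddCommGroup H] [InnerProductSpace ℂ H] [CompleteSpace H]
  {ι : Type*} [Countable ι]
  {G : ι → Type*} [∀ i, NormedAddCommGroup (G i)] [∀ i, InnerProductSpace ℂ (G i)]
  [∀ i, CompleteSpace (G i)]

theorem gframe_exists_S (Λ : ∀ i, H →L[ℂ] G i)
    (hsum : ∀ f : H, Summable fun i => (adjoint (Λ i)) (Λ i f)) :
    ∃ S : H →L[ℂ] H, ∀ f : H, S f = ∑' i, (adjoint (Λ i)) (Λ i f) := by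
  have htend : Tendsto
      (fun (s : Finset ι) (x : H) => (∑ i ∈ s, (adjoint (Λ i)).comp (Λ i)) x)
      atTop (𝓝 fun f : H => ∑' i, (adjoint (Λ i)) (Λ i f)) := by
    rw [tendsto_pi_nhds]
    intro f
    simp [ContinuousLinearMap.sum_apply]; exact (hsum f).hasSum
  exact ⟨continuousLinearMapOfTendsto _ htend, fun f => rfl⟩

theorem gframe_hasSum_normSq (Λ : ∀ i, H →L[ℂ] G i) (f : H)
    (hf : Summable fun i => (adjoint (Λ i)) (Λ i f)) :
    HasSum (fun i => ‖Λ i f‖ ^ 2)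
      (re ⟪f, ∑' i, (adjoint (Λ i)) (Λ i f)⟫) := by
  have h1 := (hf.hasSum.mapL (innerSL ℂ f)).mapL reCLM
  refine h1.congr_fun fun i => ?_
  simp [innerSL_apply_apply, ContinuousLinearMap.adjoint_inner_right, inner_self_eq_norm_sq,
    ← Complex.ofReal_pow, Complex.ofReal_re]
end aux

section aux2
variable {H : Type*} [NormedAddCommGroup H] [InnerProductSpace ℂ H] [CompleteSpace H]
  {ι : Type*}
  {G : ι → Type*} [∀ i, NormedAddCommGroup (G i)] [∀ i, InnerProductSpace ℂ (G i)]
  [∀ i, CompleteSpace (G i)]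

theorem gframe_hasSum_inner (Λ : ∀ i, H →L[ℂ] G i) (x y : H)
    (hy : Summable fun i => (adjoint (Λ i)) (Λ i y)) :
    HasSum (fun i => re ⟪Λ i x, Λ i y⟫)
      (re ⟪x, ∑' i, (adjoint (Λ i)) (Λ i y)⟫) := by
  have h1 := (hy.hasSum.mapL (innerSL ℂ x)).mapL reCLM
  refine h1.congr_fun fun i => ?_
  simp [innerSL_apply_apply, ContinuousLinearMap.adjoint_inner_right]

theorem gframe_summable (Λ : ∀ i, H →L[ℂ] G i) {B : ℝ} (hB0 : 0 ≤ B)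
    (hB : ∀ f : H, Summable (fun i => ‖Λ i f‖ ^ 2) ∧ ∑' i, ‖Λ i f‖ ^ 2 ≤ B * ‖f‖ ^ 2)
    (f : H) : Summable fun i => (adjoint (Λ i)) (Λ i f) := by
  -- key estimate : for any finset t, ‖∑ i in t, T i f‖ ≤ √(B * ∑ i in t, ‖Λ i f‖²)
  have key : ∀ t : Finset ι,
      ‖∑ i ∈ t, (adjoint (Λ i)) (Λ i f)‖ ≤ Real.sqrt (B * ∑ i ∈ t, ‖Λ i f‖ ^ 2) := by
    intro t
    set v := ∑ i ∈ t, (adjoint (Λ i)) (Λ i f) with hv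
    have h1 : ‖v‖ ^ 2 = ∑ i ∈ t, re ⟪Λ i v, Λ i f⟫ := by
      rw [← inner_self_eq_norm_sq (𝕜 := ℂ), hv, inner_sum]
      rw [map_sum]
      congr 1; ext i
      rw [ContinuousLinearMap.adjoint_inner_right]
    have h2 : ∑ i ∈ t, re ⟪Λ i v, Λ i f⟫ ≤ ∑ i ∈ t, ‖Λ i v‖ * ‖Λ i f‖ := by
      refine Finset.sum_le_sum fun i _ => ?_
      calc re ⟪Λ i v, Λ i f⟫ ≤ ‖⟪Λ i v, Λ i f⟫‖ := re_le_norm _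
        _ ≤ ‖Λ i v‖ * ‖Λ i f‖ := norm_inner_le_norm _ _
    have h3 : (∑ i ∈ t, ‖Λ i v‖ * ‖Λ i f‖) ^ 2 ≤
        (∑ i ∈ t, ‖Λ i v‖ ^ 2) * ∑ i ∈ t, ‖Λ i f‖ ^ 2 :=
      Finset.sum_mul_sq_le_sq_mul_sq t _ _
    have h4 : ∑ i ∈ t, ‖Λ i v‖ ^ 2 ≤ B * ‖v‖ ^ 2 := by
      refine le_trans (Summable.sum_le_tsum t (fun i _ => by positivity) (hB v).1) (hB v).2
    -- combine: ‖v‖^2 ≤ √(B ∑) * ‖v‖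
    have hsum_nonneg : (0:ℝ) ≤ ∑ i ∈ t, ‖Λ i f‖ ^ 2 := Finset.sum_nonneg fun i _ => by positivity
    have h5 : ‖v‖ ^ 2 ≤ Real.sqrt (B * ∑ i ∈ t, ‖Λ i f‖ ^ 2) * ‖v‖ := by
      have h6 : (∑ i ∈ t, ‖Λ i v‖ * ‖Λ i f‖) ≤ Real.sqrt (B * ∑ i ∈ t, ‖Λ i f‖ ^ 2) * ‖v‖ := by
        have hnn : (0:ℝ) ≤ ∑ i ∈ t, ‖Λ i v‖ * ‖Λ i f‖ :=
          Finset.sum_nonneg fun i _ => by positivity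
        have h7 : (∑ i ∈ t, ‖Λ i v‖ * ‖Λ i f‖) ^ 2 ≤
            (B * ∑ i ∈ t, ‖Λ i f‖ ^ 2) * ‖v‖ ^ 2 := by
          calc (∑ i ∈ t, ‖Λ i v‖ * ‖Λ i f‖) ^ 2
              ≤ (∑ i ∈ t, ‖Λ i v‖ ^ 2) * ∑ i ∈ t, ‖Λ i f‖ ^ 2 := h3
            _ ≤ (B * ‖v‖ ^ 2) * ∑ i ∈ t, ‖Λ i f‖ ^ 2 :=
                mul_le_mul_of_nonneg_right h4 hsum_nonneg
            _ = (B * ∑ i ∈ t, ‖Λ i f‖ ^ 2) * ‖v‖ ^ 2 := by ring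
        have := Real.sqrt_le_sqrt h7
        rwa [Real.sqrt_sq hnn, Real.sqrt_mul (mul_nonneg hB0 hsum_nonneg),
          Real.sqrt_sq (norm_nonneg v)] at this
      exact le_trans (by rw [h1]; exact h2) h6
    rcases eq_or_lt_of_le (norm_nonneg v) with h | h
    · rw [← h]; positivity
    · exact le_of_mul_le_mul_right (by nlinarith [h5]) h
  -- now the Cauchy criterion
  rw [summable_iff_cauchySeq_finset, cauchySeq_finset_iff_vanishing_norm]
  intro ε hε
  set δ : ℝ := ε ^ 2 / (B + 1) with hδ
  have hδpos : 0 < δ := by positivity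
  obtain ⟨s, hs⟩ := (hB f).1.vanishing (Iio_mem_nhds hδpos)
  refine ⟨s, fun t ht => ?_⟩
  have h1 : ∑ i ∈ t, ‖Λ i f‖ ^ 2 < δ := Set.mem_Iio.mp (hs t ht)
  refine lt_of_le_of_lt (key t) ?_
  have h2 : B * ∑ i ∈ t, ‖Λ i f‖ ^ 2 < ε ^ 2 := by
    have hsum_nonneg : (0:ℝ) ≤ ∑ i ∈ t, ‖Λ i f‖ ^ 2 :=
      Finset.sum_nonneg fun i _ => by positivity
    have : B * ∑ i ∈ t, ‖Λ i f‖ ^ 2 ≤ B * δ := by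
      exact mul_le_mul_of_nonneg_left h1.le hB0
    refine lt_of_le_of_lt this ?_
    rw [hδ]
    have he : B * (ε ^ 2 / (B + 1)) = ε ^ 2 * (B / (B + 1)) := by ring
    rw [he]
    calc ε ^ 2 * (B / (B + 1)) < ε ^ 2 * 1 := by
          refine mul_lt_mul_of_pos_left ?_ (by positivity)
          rw [div_lt_one (by positivity)]; linarith
      _ = ε ^ 2 := mul_one _
  calc Real.sqrt (B * ∑ i ∈ t, ‖Λ i f‖ ^ 2) < Real.sqrt (ε ^ 2) := by
        refine (Real.sqrt_lt_sqrt ?_ h2)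
        positivity
    _ = ε := Real.sqrt_sq hε.le
end aux2

section aux3
variable {H : Type*} [NormedAddCommGroup H] [InnerProductSpace ℂ H] [CompleteSpace H]

/-- Cauchy–Schwarz for the positive symmetric form `re ⟪x, S y⟫`. -/
theorem gframe_cs (S : H →L[ℂ] H)
    (hsym : ∀ x y : H, re ⟪x, S y⟫ = re ⟪y, S x⟫)
    (hpos : ∀ x : H, 0 ≤ re ⟪x, S x⟫) (x y : H) :
    (re ⟪x, S y⟫) ^ 2 ≤ re ⟪x, S x⟫ * re ⟪y, S y⟫ := by
  have hexp : ∀ t : ℝ, re ⟪x + (t : ℂ) • y, S (x + (t : ℂ) • y)⟫ =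
      re ⟪y, S y⟫ * (t * t) + (2 * re ⟪x, S y⟫) * t + re ⟪x, S x⟫ := by
    intro t
    have h1 : S (x + (t : ℂ) • y) = S x + (t : ℂ) • S y := by
      rw [map_add, map_smul]
    rw [h1, inner_add_left, inner_add_right, inner_add_right, inner_smul_left,
      inner_smul_left, inner_smul_right, inner_smul_right]
    simp only [map_add, Complex.conj_ofReal, ← mul_assoc, ← Complex.ofReal_mul,
      RCLike.re_to_complex, Complex.re_ofReal_mul]
    have hsym2 : re ⟪y, S x⟫ = re ⟪x, S y⟫ := hsym y x
    simp only [RCLike.re_to_complex] at hsym2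
    rw [hsym2]
    ring
  have hd := discrim_le_zero (a := re ⟪y, S y⟫) (b := 2 * re ⟪x, S y⟫) (c := re ⟪x, S x⟫)
    (fun t => by rw [← hexp t]; exact hpos _)
  rw [discrim] at hd
  nlinarith [hd]
end aux3

/-- `Λ` is a g-frame for `H` iff for every `f ∈ H` the family
`(Λᵢ*(Λᵢ f))ᵢ` is summable in `H` and the resulting operator
`S_Λ f = ∑ᵢ Λᵢ*Λᵢ f` is bijective; in this case `S_Λ` is bounded. -/
theorem gframe_iff_frameOperator_invertible
    {H : Type*} [NormedAddCommGroup H] [InnerProductSpace ℂ H] [CompleteSpace H]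
    {ι : Type*} [Countable ι]
    {G : ι → Type*} [∀ i, NormedAddCommGroup (G i)] [∀ i, InnerProductSpace ℂ (G i)]
    [∀ i, CompleteSpace (G i)]
    (Λ : ∀ i, H →L[ℂ] G i) :
    ((∃ A B : ℝ, 0 < A ∧ A ≤ B ∧
        ∀ f : H, Summable (fun i => ‖Λ i f‖ ^ 2) ∧
          A * ‖f‖ ^ 2 ≤ ∑' i, ‖Λ i f‖ ^ 2 ∧ ∑' i, ‖Λ i f‖ ^ 2 ≤ B * ‖f‖ ^ 2) ↔
      ((∀ f : H, Summable fun i => (ContinuousLinearMap.adjoint (Λ i)) (Λ i f)) ∧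
        Function.Bijective
          (fun f : H => ∑' i, (ContinuousLinearMap.adjoint (Λ i)) (Λ i f)))) ∧
    ((∀ f : H, Summable fun i => (ContinuousLinearMap.adjoint (Λ i)) (Λ i f)) →
      ∃ S : H →L[ℂ] H, ∀ f : H,
        S f = ∑' i, (ContinuousLinearMap.adjoint (Λ i)) (Λ i f)) := by
  refine ⟨⟨?_, ?_⟩, gframe_exists_S Λ⟩
  · -- forward direction
    rintro ⟨A, B, hA, hAB, h⟩
    have hB0 : (0:ℝ) ≤ B := le_trans hA.le hAB
    have hsum : ∀ f : H, Summable fun i => (adjoint (Λ i)) (Λ i f) :=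
      gframe_summable Λ hB0 (fun f => ⟨(h f).1, (h f).2.2⟩)
    refine ⟨hsum, ?_⟩
    obtain ⟨S, hS⟩ := gframe_exists_S Λ hsum
    have hg : (fun f : H => ∑' i, (adjoint (Λ i)) (Λ i f)) = ⇑S :=
      funext fun f => (hS f).symm
    rw [hg]
    have lower : ∀ f : H, A * ‖f‖ ^ 2 ≤ re ⟪f, S f⟫ := by
      intro f
      have h1 := (gframe_hasSum_normSq Λ f (hsum f)).tsum_eq
      rw [hS f]
      rw [← h1]
      exact (h f).2.1
    have normlb : ∀ f : H, A * ‖f‖ ≤ ‖S f‖ := by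
      intro f
      rcases eq_or_lt_of_le (norm_nonneg f) with h0 | h0
      · rw [← h0]; simp
      · have h2 : re ⟪f, S f⟫ ≤ ‖f‖ * ‖S f‖ :=
          le_trans (re_le_norm _) (norm_inner_le_norm _ _)
        have := lower f
        nlinarith
    have hinj : Function.Injective S := by
      intro a b hab
      have h1 : S (a - b) = 0 := by rw [map_sub, hab, sub_self]
      have := normlb (a - b)
      rw [h1, norm_zero] at this
      have : ‖a - b‖ ≤ 0 := by nlinarith
      rw [← sub_eq_zero]
      exact norm_le_zero_iff.mp this
    refine ⟨hinj, ?_⟩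
    -- surjectivity
    have hanti : AntilipschitzWith (⟨A⁻¹, by positivity⟩ : NNReal) S := by
      refine S.antilipschitz_of_bound fun x => ?_
      have := normlb x
      show ‖x‖ ≤ A⁻¹ * ‖S x‖
      have h9 : ‖x‖ = A⁻¹ * (A * ‖x‖) := by field_simp
      rw [h9]
      exact mul_le_mul_of_nonneg_left this (by positivity)
    have hclosed : IsClosed (Set.range S) := hanti.isClosed_range S.uniformContinuous
    have hrange : ((LinearMap.range (S : H →ₗ[ℂ] H) : Submodule ℂ H) : Set H) = Set.range S := by
      ext u; simp [LinearMap.mem_range]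
    have hcomp : CompleteSpace (LinearMap.range (S : H →ₗ[ℂ] H) : Submodule ℂ H) := by
      refine IsClosed.completeSpace_coe (hs := ?_)
      rw [hrange]; exact hclosed
    have horth : (LinearMap.range (S : H →ₗ[ℂ] H))ᗮ = ⊥ := by
      rw [Submodule.eq_bot_iff]
      intro g hg'
      have h1 : ⟪S g, g⟫ = 0 :=
        (Submodule.mem_orthogonal (LinearMap.range (S : H →ₗ[ℂ] H)) g).mp hg' (S g) (LinearMap.mem_range_self _ g)
      have h2 : re ⟪g, S g⟫ = 0 := by rw [inner_re_symm, h1, map_zero]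
      have := lower g
      rw [h2] at this
      have : ‖g‖ ^ 2 ≤ 0 := by nlinarith
      have : ‖g‖ = 0 := by nlinarith [norm_nonneg g, sq_nonneg ‖g‖]
      exact norm_eq_zero.mp this
    have htop : LinearMap.range (S : H →ₗ[ℂ] H) = ⊤ := Submodule.orthogonal_eq_bot_iff.mp horth
    exact LinearMap.range_eq_top.mp htop
  · -- backward direction
    rintro ⟨hsum, hbij⟩
    obtain ⟨S, hS⟩ := gframe_exists_S Λ hsum
    have hg : (fun f : H => ∑' i, (adjoint (Λ i)) (Λ i f)) = ⇑S :=
      funext fun f => (hS f).symm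
    rw [hg] at hbij
    -- symmetric positive form
    have hhs : ∀ x y : H, HasSum (fun i => re ⟪Λ i x, Λ i y⟫) (re ⟪x, S y⟫) := by
      intro x y
      have := gframe_hasSum_inner Λ x y (hsum y)
      rwa [← hS y] at this
    have hsym : ∀ x y : H, re ⟪x, S y⟫ = re ⟪y, S x⟫ := by
      intro x y
      refine (hhs x y).unique ?_
      refine ((hhs y x).congr_fun fun i => inner_re_symm _ _)
    have hnormSq : ∀ f : H, HasSum (fun i => ‖Λ i f‖ ^ 2) (re ⟪f, S f⟫) := by
      intro f
      have := gframe_hasSum_normSq Λ f (hsum f)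
      rwa [← hS f] at this
    have hpos : ∀ x : H, 0 ≤ re ⟪x, S x⟫ :=
      fun x => (hnormSq x).nonneg fun i => by positivity
    -- the inverse
    let e : H ≃L[ℂ] H := ContinuousLinearEquiv.ofBijective S
      (LinearMap.ker_eq_bot.mpr hbij.injective) (LinearMap.range_eq_top.mpr hbij.surjective)
    have hcs := gframe_cs S hsym hpos
    set C : ℝ := ‖(e.symm : H →L[ℂ] H)‖ with hC
    have hC0 : 0 ≤ C := norm_nonneg _
    refine ⟨1 / (C + 1), max ‖S‖ (1 / (C + 1)), by positivity, le_max_right _ _, fun f => ?_⟩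
    refine ⟨(hnormSq f).summable, ?_, ?_⟩
    · -- lower frame bound
      rw [(hnormSq f).tsum_eq]
      rcases eq_or_lt_of_le (norm_nonneg f) with h0 | h0
      · rw [← h0]
        simpa using hpos f
      · set y := e.symm f with hy
        have hSy : S y = f := by
          exact e.apply_symm_apply f
        have hyle : ‖y‖ ≤ C * ‖f‖ := by
          have h6 := (e.symm : H →L[ℂ] H).le_opNorm f
          simpa using h6
        have h1 : re ⟪f, S y⟫ = ‖f‖ ^ 2 := by rw [hSy, inner_self_eq_norm_sq]
        have h2 : re ⟪y, S y⟫ ≤ C * ‖f‖ ^ 2 := by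
          rw [hSy]
          calc re ⟪y, f⟫ ≤ ‖y‖ * ‖f‖ := le_trans (re_le_norm _) (norm_inner_le_norm _ _)
            _ ≤ C * ‖f‖ * ‖f‖ := by nlinarith [norm_nonneg f]
            _ = C * ‖f‖ ^ 2 := by ring
        have h3 := hcs f y
        rw [h1] at h3
        have h4 : (‖f‖ ^ 2) ^ 2 ≤ re ⟪f, S f⟫ * (C * ‖f‖ ^ 2) :=
          le_trans h3 (mul_le_mul_of_nonneg_left h2 (hpos f))
        have hf2 : (0:ℝ) < ‖f‖ ^ 2 := by positivity
        rw [div_mul_eq_mul_div, div_le_iff₀ (by positivity)]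
        nlinarith [h4, hpos f, hf2]
    · -- upper frame bound
      rw [(hnormSq f).tsum_eq]
      calc re ⟪f, S f⟫ ≤ ‖f‖ * ‖S f‖ := le_trans (re_le_norm _) (norm_inner_le_norm _ _)
        _ ≤ ‖f‖ * (‖S‖ * ‖f‖) := by nlinarith [S.le_opNorm f, norm_nonneg f]
        _ ≤ max ‖S‖ (1 / (C + 1)) * ‖f‖ ^ 2 := by
            nlinarith [le_max_left ‖S‖ (1 / (C + 1)), sq_nonneg ‖f‖, norm_nonneg f]
end

section
/- Let Λ = (Λ_i)_{i∈I} and Θ = (Θ_i)_{i∈I} be g-Bessel sequences for H, suppose the family m = (m_i)_{i∈I} of complex numbers tends to 0 along the cofinite filter on I (m ∈ c₀), and suppose there is N such that each Θ_i has finite rank with rank(Θ_i) ≤ N. Then the g-multiplier M_{m,Λ,Θ} : H → H, M_{m,Λ,Θ} f = ∑_{i∈I} m_i Λ_i*(Θ_i f), is a compact operator. -/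
lemma myCompactOfFiniteRank {E F : Type*} [NormedAddCommGroup E] [NormedSpace ℂ E]
    [NormedAddCommGroup F] [NormedSpace ℂ F] (T : E →L[ℂ] F)
    (h : FiniteDimensional ℂ (LinearMap.range T.toLinearMap)) : IsCompactOperator T := by
  set V := LinearMap.range T.toLinearMap with hV
  haveI : FiniteDimensional ℂ V := h
  refine ⟨Subtype.val '' Metric.closedBall (0 : V) ‖T‖,
    (isCompact_closedBall _ _).image continuous_subtype_val, ?_⟩
  refine Filter.mem_of_superset (Metric.closedBall_mem_nhds 0 one_pos) ?_
  intro x hx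
  have hmem : T x ∈ V := LinearMap.mem_range_self _ x
  refine ⟨⟨T x, hmem⟩, ?_, rfl⟩
  simp only [Metric.mem_closedBall, dist_zero_right]
  have : ‖(⟨T x, hmem⟩ : V)‖ = ‖T x‖ := rfl
  rw [this]
  calc ‖T x‖ ≤ ‖T‖ * ‖x‖ := T.le_opNorm x
    _ ≤ ‖T‖ * 1 := by
        have := mem_closedBall_zero_iff.mp hx
        exact mul_le_mul_of_nonneg_left (by simpa using this) (norm_nonneg T)
    _ = ‖T‖ := mul_one _
open scoped ComplexConjugate

lemma myKeyBound
    {H : Type*} [NormedAddCommGroup H] [InnerProductSpace ℂ H] [CompleteSpace H]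
    {ι : Type*}
    {G : ι → Type*} [∀ i, NormedAddCommGroup (G i)] [∀ i, InnerProductSpace ℂ (G i)]
    [∀ i, CompleteSpace (G i)]
    (Λ Θ : ∀ i, H →L[ℂ] G i) (B B' : ℝ)
    (hΛsum : ∀ f : H, Summable fun i => ‖Λ i f‖ ^ 2)
    (hΛ : ∀ f : H, ∑' i, ‖Λ i f‖ ^ 2 ≤ B * ‖f‖ ^ 2)
    (hΘsum : ∀ f : H, Summable fun i => ‖Θ i f‖ ^ 2)
    (hΘ : ∀ f : H, ∑' i, ‖Θ i f‖ ^ 2 ≤ B' * ‖f‖ ^ 2)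
    (μ : ι → ℂ) (ε : ℝ) (hε : 0 ≤ ε) (S : Finset ι) (hμ : ∀ i ∈ S, ‖μ i‖ ≤ ε) (f : H) :
    ‖∑ i ∈ S, μ i • (ContinuousLinearMap.adjoint (Λ i)) (Θ i f)‖ ≤
      ε * (Real.sqrt B * Real.sqrt B') * ‖f‖ := by
  set v := ∑ i ∈ S, μ i • (ContinuousLinearMap.adjoint (Λ i)) (Θ i f) with hv
  have hinner : (inner ℂ v v : ℂ) = ∑ i ∈ S, conj (μ i) * (inner ℂ (Θ i f) (Λ i v) : ℂ) := by
    rw [hv, sum_inner]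
    refine Finset.sum_congr rfl fun i _ => ?_
    rw [inner_smul_left, ContinuousLinearMap.adjoint_inner_left]
  have h1 : ‖v‖ ^ 2 ≤ ε * ∑ i ∈ S, ‖Θ i f‖ * ‖Λ i v‖ := by
    have : ‖v‖ ^ 2 = Complex.re (inner ℂ v v : ℂ) := (inner_self_eq_norm_sq (𝕜 := ℂ) v).symm
    rw [this, hinner]
    calc Complex.re (∑ i ∈ S, conj (μ i) * (inner ℂ (Θ i f) (Λ i v) : ℂ))
        ≤ ‖∑ i ∈ S, conj (μ i) * (inner ℂ (Θ i f) (Λ i v) : ℂ)‖ := Complex.re_le_norm _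
      _ ≤ ∑ i ∈ S, ‖conj (μ i) * (inner ℂ (Θ i f) (Λ i v) : ℂ)‖ := norm_sum_le _ _
      _ ≤ ∑ i ∈ S, ε * (‖Θ i f‖ * ‖Λ i v‖) := by
          refine Finset.sum_le_sum fun i hi => ?_
          rw [norm_mul, RCLike.norm_conj]
          exact mul_le_mul (hμ i hi) (norm_inner_le_norm _ _) (norm_nonneg _)
            (le_trans (norm_nonneg _) (hμ i hi))
      _ = ε * ∑ i ∈ S, ‖Θ i f‖ * ‖Λ i v‖ := (Finset.mul_sum _ _ _).symm
  have hsum : ∑ i ∈ S, ‖Θ i f‖ * ‖Λ i v‖ ≤ (Real.sqrt B' * ‖f‖) * (Real.sqrt B * ‖v‖) := by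
    calc ∑ i ∈ S, ‖Θ i f‖ * ‖Λ i v‖
        ≤ Real.sqrt (∑ i ∈ S, ‖Θ i f‖ ^ 2) * Real.sqrt (∑ i ∈ S, ‖Λ i v‖ ^ 2) :=
          Real.sum_mul_le_sqrt_mul_sqrt _ _ _
      _ ≤ Real.sqrt (B' * ‖f‖ ^ 2) * Real.sqrt (B * ‖v‖ ^ 2) := by
          gcongr <;>
          [exact le_trans (Summable.sum_le_tsum S (fun i _ => sq_nonneg _) (hΘsum f)) (hΘ f);
           exact le_trans (Summable.sum_le_tsum S (fun i _ => sq_nonneg _) (hΛsum v)) (hΛ v)]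
      _ = (Real.sqrt B' * ‖f‖) * (Real.sqrt B * ‖v‖) := by
          rw [Real.sqrt_mul' _ (sq_nonneg _), Real.sqrt_mul' _ (sq_nonneg _),
            Real.sqrt_sq (norm_nonneg f), Real.sqrt_sq (norm_nonneg v)]
  have key : ‖v‖ * ‖v‖ ≤ (ε * (Real.sqrt B * Real.sqrt B') * ‖f‖) * ‖v‖ := by
    have h2 : ‖v‖ ^ 2 ≤ ε * ((Real.sqrt B' * ‖f‖) * (Real.sqrt B * ‖v‖)) :=
      h1.trans (mul_le_mul_of_nonneg_left hsum hε)
    rw [pow_two] at h2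
    have h3 : (ε * (Real.sqrt B * Real.sqrt B') * ‖f‖) * ‖v‖ =
        ε * ((Real.sqrt B' * ‖f‖) * (Real.sqrt B * ‖v‖)) := by ring
    rw [h3]; exact h2
  rcases eq_or_lt_of_le (norm_nonneg v) with h0 | h0
  · rw [← h0]; positivity
  · exact le_of_mul_le_mul_right key h0



/-- For g-Bessel sequences `Λ, Θ`, a symbol `m ∈ c₀` (tending to `0` along
the cofinite filter) and uniformly bounded ranks `rank(Θᵢ) ≤ N`, the g-multiplier
`M_{m,Λ,Θ} f = ∑ᵢ mᵢ Λᵢ*(Θᵢ f)` is a compact operator on `H`. -/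
theorem gMultiplier_compact
    {H : Type*} [NormedAddCommGroup H] [InnerProductSpace ℂ H] [CompleteSpace H]
    {ι : Type*} [Countable ι]
    {G : ι → Type*} [∀ i, NormedAddCommGroup (G i)] [∀ i, InnerProductSpace ℂ (G i)]
    [∀ i, CompleteSpace (G i)]
    (Λ Θ : ∀ i, H →L[ℂ] G i)
    (B B' : ℝ)
    (hΛsum : ∀ f : H, Summable fun i => ‖Λ i f‖ ^ 2)
    (hΛ : ∀ f : H, ∑' i, ‖Λ i f‖ ^ 2 ≤ B * ‖f‖ ^ 2)
    (hΘsum : ∀ f : H, Summable fun i => ‖Θ i f‖ ^ 2)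
    (hΘ : ∀ f : H, ∑' i, ‖Θ i f‖ ^ 2 ≤ B' * ‖f‖ ^ 2)
    (m : ι → ℂ)
    (hm : Filter.Tendsto m Filter.cofinite (nhds 0))
    (N : ℕ)
    (hfin : ∀ i, FiniteDimensional ℂ (LinearMap.range (Θ i).toLinearMap))
    (hrank : ∀ i, Module.finrank ℂ (LinearMap.range (Θ i).toLinearMap) ≤ N) :
    ∃ M : H →L[ℂ] H,
      (∀ f : H,
        HasSum (fun i => m i • (ContinuousLinearMap.adjoint (Λ i)) (Θ i f)) (M f)) ∧
      IsCompactOperator M := by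
  classical
  set sq : ℝ := Real.sqrt B * Real.sqrt B' with hsqdef
  have hsqnn : 0 ≤ sq := mul_nonneg (Real.sqrt_nonneg _) (Real.sqrt_nonneg _)
  set A : ∀ i, H → H := fun i f => (ContinuousLinearMap.adjoint (Λ i)) (Θ i f) with hA
  -- the key per-finset bound, specialized
  have keyB : ∀ (μ : ι → ℂ) (ε : ℝ), 0 ≤ ε → ∀ (S : Finset ι), (∀ i ∈ S, ‖μ i‖ ≤ ε) →
      ∀ f : H, ‖∑ i ∈ S, μ i • A i f‖ ≤ ε * sq * ‖f‖ :=
    fun μ ε hε S hμ f => myKeyBound Λ Θ B B' hΛsum hΛ hΘsum hΘ μ ε hε S hμ f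
  -- finiteness of superlevel sets of ‖m‖
  have hfinδ : ∀ δ : ℝ, 0 < δ → {i | δ ≤ ‖m i‖}.Finite := by
    intro δ hδ
    have h := hm (Metric.ball_mem_nhds (0 : ℂ) hδ)
    rw [Filter.mem_map, Filter.mem_cofinite] at h
    refine h.subset fun i hi => ?_
    simp only [Set.mem_compl_iff, Set.mem_preimage, Metric.mem_ball, dist_zero_right]
    exact not_lt.mpr hi
  -- global bound on m
  obtain ⟨C, hC0, hC⟩ : ∃ C : ℝ, 0 ≤ C ∧ ∀ i, ‖m i‖ ≤ C := by
    set s₀ := (hfinδ 1 one_pos).toFinset with hs₀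
    refine ⟨1 + ∑ i ∈ s₀, ‖m i‖, by positivity, fun i => ?_⟩
    by_cases hi : i ∈ s₀
    · have h1 := Finset.single_le_sum (f := fun j => ‖m j‖) (fun j _ => norm_nonneg _) hi
      linarith
    · have : ¬ (1 : ℝ) ≤ ‖m i‖ := by
        intro h; exact hi ((hfinδ 1 one_pos).mem_toFinset.mpr h)
      have h2 : (0:ℝ) ≤ ∑ i ∈ s₀, ‖m i‖ := Finset.sum_nonneg fun j _ => norm_nonneg _
      linarith [not_le.mp this]
  -- summability
  have hSf : ∀ f : H, Summable (fun i => m i • A i f) := by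
    intro f
    rw [summable_iff_vanishing]
    intro e he
    obtain ⟨δ, hδpos, hδ⟩ := Metric.mem_nhds_iff.mp he
    have hd : (0:ℝ) < δ / (sq * ‖f‖ + 1) := by positivity
    refine ⟨(hfinδ _ hd).toFinset, fun t ht => ?_⟩
    apply hδ
    rw [Metric.mem_ball, dist_zero_right]
    have hμ : ∀ i ∈ t, ‖m i‖ ≤ δ / (sq * ‖f‖ + 1) := by
      intro i hi
      have hni : i ∉ (hfinδ _ hd).toFinset := fun h => (Finset.disjoint_left.mp ht hi) h
      rw [Set.Finite.mem_toFinset] at hni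
      exact le_of_not_ge hni
    calc ‖∑ i ∈ t, m i • A i f‖ ≤ (δ / (sq * ‖f‖ + 1)) * sq * ‖f‖ :=
          keyB m _ hd.le t hμ f
      _ < δ := by
          rw [div_mul_eq_mul_div, div_mul_eq_mul_div, div_lt_iff₀ (by positivity)]
          nlinarith [norm_nonneg f, mul_nonneg hsqnn (norm_nonneg f)]
  have hkey : ∀ f : H, HasSum (fun i => m i • A i f) (∑' i, m i • A i f) :=
    fun f => (hSf f).hasSum
  -- the linear map
  set M₀ : H →ₗ[ℂ] H :=
    { toFun := fun f => ∑' i, m i • A i f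
      map_add' := by
        intro x y
        have h := (hkey x).add (hkey y)
        have e : (fun i => m i • A i x + m i • A i y) = fun i => m i • A i (x + y) := by
          funext i; simp [hA, map_add, smul_add]
        rw [e] at h
        exact h.tsum_eq
      map_smul' := by
        intro c x
        have h := (hkey x).const_smul c
        have e : (fun i => c • (m i • A i x)) = fun i => m i • A i (c • x) := by
          funext i
          show c • (m i • (ContinuousLinearMap.adjoint (Λ i)) (Θ i x))
              = m i • (ContinuousLinearMap.adjoint (Λ i)) (Θ i (c • x))
          rw [map_smul, map_smul]
          exact smul_comm c (m i) _
        rw [e] at h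
        simpa using h.tsum_eq } with hM₀
  have hM₀bound : ∀ f : H, ‖M₀ f‖ ≤ C * sq * ‖f‖ := by
    intro f
    have htd : Filter.Tendsto (fun S : Finset ι => ‖∑ i ∈ S, m i • A i f‖)
        Filter.atTop (nhds ‖M₀ f‖) := (hkey f).norm
    exact le_of_tendsto' htd fun S => keyB m C hC0 S (fun i _ => hC i) f
  set M : H →L[ℂ] H := M₀.mkContinuous (C * sq) hM₀bound with hMdef
  have hMapp : ∀ f : H, M f = ∑' i, m i • A i f := fun f => rfl
  refine ⟨M, fun f => by rw [hMapp]; exact hkey f, ?_⟩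
  -- finite partial-sum operators
  set F : Finset ι → (H →L[ℂ] H) :=
    fun S => ∑ i ∈ S, m i • ((ContinuousLinearMap.adjoint (Λ i)).comp (Θ i)) with hF
  have hFapp : ∀ (S : Finset ι) (f : H), F S f = ∑ i ∈ S, m i • A i f := by
    intro S f
    change (∑ i ∈ S, m i • ((ContinuousLinearMap.adjoint (Λ i)).comp (Θ i))) f = _
    rw [ContinuousLinearMap.sum_apply]
    exact Finset.sum_congr rfl fun i _ => rfl
  have hFc : ∀ S : Finset ι, IsCompactOperator (F S) := by
    intro S
    induction S using Finset.induction_on with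
    | empty =>
      have he : F ∅ = 0 := by simp only [hF]; exact Finset.sum_empty
      rw [he]
      exact isCompactOperator_zero
    | insert a s ha ih =>
      have heq : F (insert a s)
          = m a • ((ContinuousLinearMap.adjoint (Λ a)).comp (Θ a)) + F s := by
        simp only [hF]; exact Finset.sum_insert ha
      have h1 : IsCompactOperator (Θ a) := myCompactOfFiniteRank (Θ a) (hfin a)
      have h2 := (h1.clm_comp (ContinuousLinearMap.adjoint (Λ a))).smul (m a)
      have h3 : IsCompactOperator
          ⇑((m a • ((ContinuousLinearMap.adjoint (Λ a)).comp (Θ a)) : H →L[ℂ] H)) := by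
        have hco : ⇑((m a • ((ContinuousLinearMap.adjoint (Λ a)).comp (Θ a)) : H →L[ℂ] H))
            = m a • (⇑(ContinuousLinearMap.adjoint (Λ a)) ∘ ⇑(Θ a)) := rfl
        rw [hco]; exact h2
      have hgoal : IsCompactOperator ⇑(F (insert a s)) := by
        rw [heq]
        exact h3.add ih
      exact hgoal
  -- convergence in operator norm
  have htendsto : Filter.Tendsto F Filter.atTop (nhds M) := by
    rw [Metric.tendsto_atTop]
    intro ε hε
    have hd : (0:ℝ) < ε / (2 * (sq + 1)) := by positivity
    set δ' := ε / (2 * (sq + 1)) with hδ'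
    refine ⟨(hfinδ δ' hd).toFinset, fun S hS => ?_⟩
    rw [dist_eq_norm, norm_sub_rev]
    set μ : ι → ℂ := fun i => if i ∈ S then 0 else m i with hμdef
    have hμb : ∀ i, ‖μ i‖ ≤ δ' := by
      intro i
      by_cases hi : i ∈ S
      · simp [hμdef, hi, hd.le]
      · have hni : i ∉ (hfinδ δ' hd).toFinset := fun h => hi (hS h)
        rw [Set.Finite.mem_toFinset] at hni
        simp only [hμdef, hi, if_false]
        exact le_of_not_ge hni
    have hband : ∀ f : H, ‖(M - F S) f‖ ≤ δ' * sq * ‖f‖ := by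
      intro f
      have hind : HasSum (fun i => if i ∈ S then m i • A i f else 0) (F S f) := by
        rw [hFapp]
        have := hasSum_sum_of_ne_finset_zero
          (s := S) (f := fun i => if i ∈ S then m i • A i f else 0) (L := SummationFilter.unconditional ι)
          (by intro i hi; simp [hi])
        convert this using 1
        exact (Finset.sum_congr rfl fun i hi => by simp [hi]).symm
      have h1 : HasSum (fun i => μ i • A i f) (M f - F S f) := by
        have h := (hkey f).sub hind
        have e : (fun i => m i • A i f - if i ∈ S then m i • A i f else 0)
            = fun i => μ i • A i f := by
          funext i
          by_cases hi : i ∈ S <;> simp [hμdef, hi]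
        rw [e] at h
        rw [hMapp]
        exact h
      have htd := h1.norm
      have h2 : ‖M f - F S f‖ ≤ δ' * sq * ‖f‖ :=
        le_of_tendsto' htd fun T => keyB μ δ' hd.le T (fun i _ => hμb i) f
      simpa using h2
    have hle : ‖M - F S‖ ≤ δ' * sq :=
      ContinuousLinearMap.opNorm_le_bound _ (by positivity) hband
    have : δ' * sq < ε := by
      rw [hδ', div_mul_eq_mul_div, div_lt_iff₀ (by positivity)]
      nlinarith
    exact lt_of_le_of_lt hle this
  exact isCompactOperator_of_tendsto htendsto (Filter.Eventually.of_forall hFc)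
end
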